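/- Let M : ℍ → 𝕆 be a deterministic program without low-security inputs and let n = |ℍ|. Then GE[U](M) = n/2 − (1/(2n))·Σ_o |ℍ_o|², where the sum is over the outputs o of M and ℍ_o = {h ∈ ℍ | M(h) = o}. -/

import Mathlib

/-!
Statement 10: For a deterministic program `M : ℍ → 𝕆` without low-security
inputs and `n = |ℍ|`: `GE[U](M) = n/2 − (1/(2n)) · Σ_o |ℍ_o|²`, where
`ℍ_o = {h ∈ ℍ | M(h) = o}`.
-/

/-- Guessing entropy of a (sub)distribution `p` on a finite type `X`:
`𝓖(p) = Σ_{1≤i≤m} i · p(x_i)` with `x_1, …, x_m` sorted so that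
`p(x_i) ≥ p(x_j)` whenever `i ≤ j`. -/
noncomputable def guess {X : Type*} [Fintype X] (p : X → ℝ) : ℝ :=
  ∑ i : Fin (Fintype.card X), ((i : ℕ) + 1 : ℝ) *
    p ((Fintype.equivFin X).symm
      (Tuple.sort (fun j => -p ((Fintype.equivFin X).symm j)) i))

/-- The uniform distribution on a finite type. -/
noncomputable def unif (X : Type*) [Fintype X] : X → ℝ :=
  fun _ => (Fintype.card X : ℝ)⁻¹


open Finset

lemma sum_fin_lt_aux (n k : ℕ) (hk : k ≤ n) :
    ∑ i : Fin n, (if (i : ℕ) < k then ((i : ℕ) + 1 : ℝ) else 0) =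
      (k : ℝ) * ((k : ℝ) + 1) / 2 := by
  rw [Fin.sum_univ_eq_sum_range (fun i => if i < k then ((i : ℕ) + 1 : ℝ) else 0)]
  rw [← Finset.sum_filter]
  have h : (Finset.range n).filter (· < k) = Finset.range k := by
    ext i; simp; omega
  rw [h]
  clear h hk
  induction k with
  | zero => simp
  | succ m ih =>
    rw [Finset.sum_range_succ, ih]
    push_cast; ring

lemma guess_two_valued {X : Type*} [Fintype X] (p : X → ℝ) (a : ℝ) (ha : 0 < a)
    (hp : ∀ x, p x = a ∨ p x = 0) :
    guess p = a * (((Finset.univ.filter fun x => p x ≠ 0).card : ℝ) *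
      (((Finset.univ.filter fun x => p x ≠ 0).card : ℝ) + 1)) / 2 := by
  classical
  set n := Fintype.card X with hn
  set e := Fintype.equivFin X with he
  set σ := Tuple.sort (fun j => -p (e.symm j)) with hσ
  set g : Fin n → ℝ := fun i => p (e.symm (σ i)) with hg
  have hganti : Antitone g := by
    intro i j hij
    have := Tuple.monotone_sort (fun j => -p (e.symm j)) hij
    simpa [hg] using this
  have hgval : ∀ i, g i = a ∨ g i = 0 := fun i => hp _
  set k := (Finset.univ.filter fun x => p x ≠ 0).card with hk
  have hkg : (Finset.univ.filter fun i : Fin n => g i ≠ 0).card = k := by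
    rw [hk]
    apply Finset.card_equiv ((σ : Equiv.Perm (Fin n)).trans e.symm)
    intro i
    simp [hg]
  have hkn : k ≤ n := by
    rw [← hkg]
    calc _ ≤ (Finset.univ : Finset (Fin n)).card := Finset.card_filter_le _ _
    _ = n := by simp
  have key : ∀ i : Fin n, g i = if (i : ℕ) < k then a else 0 := by
    intro i
    by_cases h : g i = 0
    · rw [h, if_neg]
      intro hik
      have hsub : (Finset.univ.filter fun j : Fin n => g j ≠ 0) ⊆ Finset.Iio i := by
        intro j hj
        simp only [Finset.mem_filter, Finset.mem_univ, true_and] at hj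
        rw [Finset.mem_Iio]
        by_contra hji
        push_neg at hji
        have := hganti hji
        rw [h] at this
        rcases hgval j with h1 | h1
        · rw [h1] at this; linarith
        · exact hj h1
      have := Finset.card_le_card hsub
      rw [hkg, Fin.card_Iio] at this
      omega
    · have hga : g i = a := (hgval i).resolve_right h
      rw [hga, if_pos]
      have hsub : Finset.Iic i ⊆ (Finset.univ.filter fun j : Fin n => g j ≠ 0) := by
        intro j hj
        rw [Finset.mem_Iic] at hj
        simp only [Finset.mem_filter, Finset.mem_univ, true_and]
        have := hganti hj
        rw [hga] at this
        rcases hgval j with h1 | h1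
        · rw [h1]; positivity
        · rw [h1] at this; linarith
      have := Finset.card_le_card hsub
      rw [hkg, Fin.card_Iic] at this
      omega
  have : guess p = ∑ i : Fin n, ((i : ℕ) + 1 : ℝ) * g i := rfl
  rw [this]
  have : ∀ i : Fin n, ((i : ℕ) + 1 : ℝ) * g i =
      a * (if (i : ℕ) < k then ((i : ℕ) + 1 : ℝ) else 0) := by
    intro i; rw [key i]; split <;> ring
  rw [Finset.sum_congr rfl (fun i _ => this i), ← Finset.mul_sum,
    sum_fin_lt_aux n k hkn]
  ring

variable {Hi Oi : Type*}

/-- Probability `μ(O = o)` where `O = M(H)` (no low-security inputs). -/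
noncomputable def pO [Fintype Hi] [DecidableEq Oi] (M : Hi → Oi) (μ : Hi → ℝ) (o : Oi) :
    ℝ := ∑ h, if M h = o then μ h else 0

/-- Conditional guessing entropy `𝓖[μ](H|O)` where `O = M(H)`. -/
noncomputable def condGuessHO [Fintype Hi] [Fintype Oi] [DecidableEq Oi]
    (M : Hi → Oi) (μ : Hi → ℝ) : ℝ :=
  ∑ o : Oi, pO M μ o * guess (fun h : Hi => (if M h = o then μ h else 0) / pO M μ o)

/-- Guessing-entropy-based QIF for programs without low-security inputs:
`GE[μ](M) = 𝓖[μ](H) − 𝓖[μ](H|O)`. -/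
noncomputable def GE0 [Fintype Hi] [Fintype Oi] [DecidableEq Oi]
    (M : Hi → Oi) (μ : Hi → ℝ) : ℝ :=
  guess μ - condGuessHO M μ

/-- `GE[U](M) = n/2 − (1/(2n)) Σ_o |ℍ_o|²` for programs without low-security
inputs, where `n = |ℍ|` and `ℍ_o = {h | M(h) = o}`. -/
theorem GE0_unif_eq
    [Fintype Hi] [Fintype Oi] [DecidableEq Oi] [Nonempty Hi] (M : Hi → Oi) :
    GE0 M (unif Hi) =
      (Fintype.card Hi : ℝ) / 2 -
        (1 / (2 * (Fintype.card Hi : ℝ))) *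
          ∑ o : Oi, ((Finset.univ.filter fun h : Hi => M h = o).card : ℝ) ^ 2 := by
  classical
  have hn0 : 0 < Fintype.card Hi := Fintype.card_pos
  have hnR : (0 : ℝ) < (Fintype.card Hi : ℝ) := by exact_mod_cast hn0
  set n := Fintype.card Hi with hn
  -- guessing entropy of uniform distribution
  have hguess : guess (unif Hi) = ((n : ℝ) + 1) / 2 := by
    have h2 := guess_two_valued (unif Hi) ((n : ℝ))⁻¹ (by positivity)
      (fun x => Or.inl rfl)
    have hfil : (Finset.univ.filter fun x : Hi => unif Hi x ≠ 0) = Finset.univ := by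
      ext x
      simp only [Finset.mem_filter, Finset.mem_univ, true_and, iff_true]
      simp only [unif, ← hn]
      positivity
    rw [hfil, Finset.card_univ, ← hn] at h2
    rw [h2]
    field_simp
  -- fiber cardinalities
  have hpO : ∀ o : Oi, pO M (unif Hi) o =
      ((Finset.univ.filter fun h : Hi => M h = o).card : ℝ) / n := by
    intro o
    rw [pO]
    simp only [unif, ← hn]
    rw [← Finset.sum_filter, Finset.sum_const, nsmul_eq_mul, div_eq_mul_inv]
  -- value of each conditional term
  have hterm : ∀ o : Oi, pO M (unif Hi) o *
      guess (fun h : Hi => (if M h = o then unif Hi h else 0) / pO M (unif Hi) o) =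
      ((Finset.univ.filter fun h : Hi => M h = o).card : ℝ) *
        (((Finset.univ.filter fun h : Hi => M h = o).card : ℝ) + 1) / (2 * n) := by
    intro o
    by_cases h0 : (Finset.univ.filter fun h : Hi => M h = o).card = 0
    · rw [hpO, h0]
      simp
    · have hk0 : 0 < (Finset.univ.filter fun h : Hi => M h = o).card :=
        Nat.pos_of_ne_zero h0
      have hkR : (0 : ℝ) < ((Finset.univ.filter fun h : Hi => M h = o).card : ℝ) := by
        exact_mod_cast hk0
      have hfun : (fun h : Hi => (if M h = o then unif Hi h else 0) / pO M (unif Hi) o) =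
          fun h : Hi => if M h = o then
            (((Finset.univ.filter fun h : Hi => M h = o).card : ℝ))⁻¹ else 0 := by
        funext h
        rw [hpO]
        split
        · simp only [unif, ← hn]
          field_simp
        · simp
      rw [hfun, hpO]
      have h2 := guess_two_valued
        (fun h : Hi => if M h = o then
          (((Finset.univ.filter fun h : Hi => M h = o).card : ℝ))⁻¹ else 0)
        (((Finset.univ.filter fun h : Hi => M h = o).card : ℝ))⁻¹
        (by positivity)
        (fun h => by split <;> simp)
      have hfil : (Finset.univ.filter fun h : Hi =>
          (if M h = o then
            (((Finset.univ.filter fun h : Hi => M h = o).card : ℝ))⁻¹ else 0) ≠ 0) =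
          Finset.univ.filter fun h : Hi => M h = o := by
        ext h
        by_cases hM : M h = o <;> simp [hM, hkR.ne']
      rw [hfil] at h2
      rw [h2]
      field_simp
  -- total fiber count
  have hsumk : ∑ o : Oi, ((Finset.univ.filter fun h : Hi => M h = o).card : ℝ) = n := by
    have := Finset.card_eq_sum_card_fiberwise
      (f := M) (s := (Finset.univ : Finset Hi)) (t := (Finset.univ : Finset Oi))
      (fun x _ => Finset.mem_univ _)
    rw [Finset.card_univ, ← hn] at this
    exact_mod_cast this.symm
  have hcond : condGuessHO M (unif Hi) =
      (1 / (2 * (n : ℝ))) *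
        ∑ o : Oi, ((Finset.univ.filter fun h : Hi => M h = o).card : ℝ) ^ 2 + 1 / 2 := by
    rw [condGuessHO, Finset.sum_congr rfl (fun o _ => hterm o)]
    have hexp : ∀ o : Oi,
        ((Finset.univ.filter fun h : Hi => M h = o).card : ℝ) *
          (((Finset.univ.filter fun h : Hi => M h = o).card : ℝ) + 1) / (2 * n) =
        (1 / (2 * (n : ℝ))) * ((Finset.univ.filter fun h : Hi => M h = o).card : ℝ) ^ 2 +
        (1 / (2 * (n : ℝ))) * ((Finset.univ.filter fun h : Hi => M h = o).card : ℝ) := by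
      intro o
      field_simp
    rw [Finset.sum_congr rfl (fun o _ => hexp o), Finset.sum_add_distrib,
      ← Finset.mul_sum, ← Finset.mul_sum, hsumk]
    have hn2 : (1 / (2 * (n : ℝ))) * (n : ℝ) = 1 / 2 := by
      rw [one_div, mul_inv, mul_assoc, inv_mul_cancel₀ hnR.ne', mul_one, one_div]
    rw [hn2]
  rw [GE0, hguess, hcond]
  ring
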